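/- Let A_N be the Taft algebra over k containing a primitive N-th root of unity ω, realized as B#kG with B = k[x]/(x^N) and G = ⟨g⟩ cyclic of order N acting by g·x = ωx. The G-invariants of A_N under the conjugation-type action (twisted by χ^{iN+1} = ω in odd degrees) are: A^G = kG in even degrees, and A^G = Span_k{x, xg, …, xg^{N-1}} in odd degrees. -/

import Mathlib

/-- In the Taft algebra `A_N`, the `G`-invariants under the conjugation-type
action (untwisted in even degrees, twisted by `ω` in odd degrees) are:
`A^G = kG = Span{g^j}` in even degrees, and `A^G = Span{x g^j}` in odd
degrees.  (Invariance under the even action of the generator `g` reads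
`g a g⁻¹ = a`, i.e. `g a = a g`; under the odd action `ω g a g⁻¹ = a`,
i.e. `ω (g a) = a g`.) -/
theorem taft_invariants
    (k : Type*) [Field k] (N : ℕ) (hN : 2 ≤ N)
    (ω : k) (hω : IsPrimitiveRoot ω N)
    (A : Type*) [Ring A] [Algebra k A]
    (g x : A) (hg : g ^ N = 1) (hx : x ^ N = 0) (hxg : x * g = ω • (g * x))
    (b : Module.Basis (Fin N × Fin N) k A)
    (hb : ∀ i j : Fin N, b (i, j) = x ^ (i : ℕ) * g ^ (j : ℕ)) :
    {a : A | g * a = a * g} =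
      ↑(Submodule.span k (Set.range fun j : Fin N => g ^ (j : ℕ))) ∧
    {a : A | ω • (g * a) = a * g} =
      ↑(Submodule.span k (Set.range fun j : Fin N => x * g ^ (j : ℕ))) := by
  haveI : NeZero N := ⟨by omega⟩
  have hω0 : ω ≠ 0 := hω.ne_zero (by omega)
  have key : ∀ i : ℕ, x ^ i * g = ω ^ i • (g * x ^ i) := by
    intro i
    induction i with
    | zero => simp
    | succ n ih =>
      rw [pow_succ, mul_assoc, hxg, mul_smul_comm, ← mul_assoc, ih, smul_mul_assoc,
        smul_smul, mul_assoc, ← pow_succ', ← pow_succ]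
  have gkey : ∀ i : ℕ, g * x ^ i = (ω ^ i)⁻¹ • (x ^ i * g) := by
    intro i
    rw [key i, smul_smul, inv_mul_cancel₀ (pow_ne_zero _ hω0), one_smul]
  have gpow : ∀ m : ℕ, g ^ m = g ^ (m % N) := by
    intro m
    conv_lhs => rw [← Nat.mod_add_div m N]
    rw [pow_add, pow_mul, hg, one_pow, mul_one]
  set e : Fin N × Fin N ≃ Fin N × Fin N :=
    (Equiv.refl (Fin N)).prodCongr (Equiv.addRight 1) with he
  have hval1 : ((1 : Fin N) : ℕ) = 1 := by
    have : (1 : ℕ) < N := by omega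
    simp [Fin.val_one', Nat.mod_eq_of_lt this]
  have hbe : ∀ p : Fin N × Fin N, b p * g = b (e p) := by
    rintro ⟨i, j⟩
    have : b (e (i, j)) = x ^ (i:ℕ) * g ^ ((j:ℕ) + 1) := by
      show b (i, j + 1) = _
      rw [hb, Fin.val_add, hval1, ← gpow]
    rw [this, hb, mul_assoc, ← pow_succ]
  have hgbe : ∀ p : Fin N × Fin N, g * b p = (ω ^ ((p.1 : ℕ)))⁻¹ • b (e p) := by
    rintro ⟨i, j⟩
    rw [← hbe, hb, ← mul_assoc, gkey, smul_mul_assoc]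
    simp only [mul_assoc, ← pow_succ, ← pow_succ']
  -- sum computations
  have hag : ∀ a : A, a * g = ∑ p, b.repr a p • b (e p) := by
    intro a
    conv_lhs => rw [← b.sum_repr a]
    rw [Finset.sum_mul]
    exact Finset.sum_congr rfl fun p _ => by rw [smul_mul_assoc, hbe]
  have hga : ∀ a : A, g * a = ∑ p, ((ω ^ ((p.1 : ℕ)))⁻¹ * b.repr a p) • b (e p) := by
    intro a
    conv_lhs => rw [← b.sum_repr a]
    rw [Finset.mul_sum]
    exact Finset.sum_congr rfl fun p _ => by
      rw [mul_smul_comm, hgbe, smul_smul, mul_comm]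
  have hinj : ∀ c d : Fin N × Fin N → k,
      (∑ p, c p • b (e p) = ∑ p, d p • b (e p)) ↔ ∀ p, c p = d p := by
    intro c d
    constructor
    · intro h p
      have li : LinearIndependent k (fun p => b (e p)) :=
        b.linearIndependent.comp e e.injective
      have hz : ∑ p, (c p - d p) • b (e p) = 0 := by
        simp only [sub_smul, Finset.sum_sub_distrib, h, sub_self]
      exact sub_eq_zero.mp (Fintype.linearIndependent_iff.mp li (fun p => c p - d p) hz p)
    · intro h
      exact Finset.sum_congr rfl fun p _ => by rw [h]
  -- membership characterizations
  have hsupp : ∀ (a : A) (i0 : Fin N),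
      a ∈ Submodule.span k (b '' {p : Fin N × Fin N | p.1 = i0}) ↔
        ∀ p : Fin N × Fin N, p.1 ≠ i0 → b.repr a p = 0 := by
    intro a i0
    rw [b.mem_span_image]
    constructor
    · intro h p hp
      by_contra hne
      exact hp (h (Finsupp.mem_support_iff.mpr hne))
    · intro h p hp
      by_contra hne
      exact Finsupp.mem_support_iff.mp hp (h p hne)
  have himg0 : (Set.range fun j : Fin N => g ^ (j : ℕ)) =
      b '' {p : Fin N × Fin N | p.1 = 0} := by
    ext y
    constructor
    · rintro ⟨j, rfl⟩
      exact ⟨(0, j), rfl, by rw [hb]; simp⟩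
    · rintro ⟨⟨i, j⟩, hi, rfl⟩
      simp only [Set.mem_setOf_eq] at hi
      subst hi
      exact ⟨j, by rw [hb]; simp⟩
  have himg1 : (Set.range fun j : Fin N => x * g ^ (j : ℕ)) =
      b '' {p : Fin N × Fin N | p.1 = 1} := by
    ext y
    constructor
    · rintro ⟨j, rfl⟩
      exact ⟨(1, j), rfl, by rw [hb, hval1, pow_one]⟩
    · rintro ⟨⟨i, j⟩, hi, rfl⟩
      simp only [Set.mem_setOf_eq] at hi
      subst hi
      exact ⟨j, by rw [hb, hval1, pow_one]⟩
  constructor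
  · ext a
    simp only [Set.mem_setOf_eq, SetLike.mem_coe, himg0, hsupp]
    rw [hga, hag, hinj]
    constructor
    · intro h p hp
      have hi : (0 : ℕ) < (p.1 : ℕ) := by
        rcases Nat.eq_zero_or_pos (p.1 : ℕ) with h0 | h0
        · exact absurd (Fin.ext (by simp [h0])) hp
        · exact h0
      have hne1 : (ω ^ ((p.1 : ℕ)))⁻¹ ≠ 1 := by
        intro hc
        exact hω.pow_ne_one_of_pos_of_lt hi.ne' p.1.isLt
          (by rw [← inv_inv (ω ^ ((p.1:ℕ))), hc, inv_one])
      by_contra hr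
      apply hne1
      have := h p
      rcases mul_eq_mul_right_iff.mp (by rw [this, one_mul] : (ω ^ ((p.1:ℕ)))⁻¹ * b.repr a p = 1 * b.repr a p) with h1 | h2
      · exact h1
      · exact absurd h2 hr
    · intro h p
      rcases eq_or_ne p.1 0 with h0 | h0
      · rw [h0]; simp
      · rw [h p h0, mul_zero]
  · ext a
    simp only [Set.mem_setOf_eq, SetLike.mem_coe, himg1, hsupp]
    have hodd : ω • (g * a) = ∑ p, (ω * ((ω ^ ((p.1 : ℕ)))⁻¹ * b.repr a p)) • b (e p) := by
      rw [hga, Finset.smul_sum]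
      exact Finset.sum_congr rfl fun p _ => by rw [smul_smul]
    rw [hodd, hag, hinj]
    constructor
    · intro h p hp
      have hne1 : ω * (ω ^ ((p.1 : ℕ)))⁻¹ ≠ 1 := by
        intro hc
        have h2 : ω ^ (1:ℕ) = ω ^ ((p.1 : ℕ)) := by
          rw [pow_one]
          exact (div_eq_one_iff_eq (pow_ne_zero _ hω0)).mp
            (by rw [div_eq_mul_inv]; exact hc)
        have h3 := hω.pow_inj (by omega) p.1.isLt h2
        exact hp (Fin.ext (by rw [hval1]; exact h3.symm))
      by_contra hr
      apply hne1
      have := h p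
      rw [← mul_assoc] at this
      rcases mul_eq_mul_right_iff.mp (by rw [this, one_mul] : ω * (ω ^ ((p.1:ℕ)))⁻¹ * b.repr a p = 1 * b.repr a p) with h1 | h2
      · exact h1
      · exact absurd h2 hr
    · intro h p
      rcases eq_or_ne p.1 1 with h0 | h0
      · rw [h0, hval1, pow_one, mul_inv_cancel_left₀ hω0]
      · rw [h p h0, mul_zero, mul_zero]
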